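/- Let (A, 𝔪) be a Noetherian local ring with algebraically closed residue field, equipped with a filtration F = {F_i} with F_1 = 𝔪, F_i F_j ⊆ F_{i+j}, whose associated graded ring G_F = ⊕ F_i/F_{i+1} is an integral domain. If I is an ideal with F_i ⊆ I ⊆ F_{i-1} and length_A(I/F_i) = 1, then I is integrally closed. -/

import Mathlib

open IsLocalRing

universe u v

/-- `x` is integral over the ideal `I`: it satisfies an equation
`x^n + a_1 x^{n-1} + ⋯ + a_n = 0` with `a_s ∈ I^s`. -/
def IsIntegralOverIdeal {A : Type*} [CommRing A] (I : Ideal A) (x : A) : Prop :=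
  ∃ n : ℕ, 0 < n ∧ ∃ a : ℕ → A, (∀ s ∈ Finset.Icc 1 n, a s ∈ I ^ s) ∧
    x ^ n + ∑ s ∈ Finset.Icc 1 n, a s * x ^ (n - s) = 0

/-- An ideal is integrally closed if it contains every element integral over it. -/
def IdealIsIntegrallyClosed {A : Type*} [CommRing A] (I : Ideal A) : Prop :=
  ∀ x : A, IsIntegralOverIdeal I x → x ∈ I

/-- An ideal of a local ring is `𝔪`-primary if `𝔪^n ⊆ I ⊆ 𝔪` for some `n`. -/
def IsMPrimary (A : Type*) [CommRing A] [IsLocalRing A] (I : Ideal A) : Prop :=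
  ∃ n : ℕ, maximalIdeal A ^ n ≤ I ∧ I ≤ maximalIdeal A

section AuxiliaryLemmas

open Polynomial

section Helpers

variable {A : Type*} [CommRing A]

private lemma powMemF (F : ℕ → Ideal A) (hF0 : F 0 = ⊤)
    (hmul : ∀ i j : ℕ, F i * F j ≤ F (i + j)) {x : A} {d : ℕ} (hx : x ∈ F d) :
    ∀ m : ℕ, x ^ m ∈ F (m * d) := by
  intro m
  induction m with
  | zero => simp [hF0]
  | succ m ih =>
      have h : x * x ^ m ∈ F (d + m * d) := hmul d (m * d) (Ideal.mul_mem_mul hx ih)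
      have he : (m + 1) * d = d + m * d := by ring
      have hp : x ^ (m + 1) = x * x ^ m := by ring
      rw [he, hp]
      exact h

private lemma powNotMemF (F : ℕ → Ideal A) (hF0 : F 0 = ⊤)
    (hmul : ∀ i j : ℕ, F i * F j ≤ F (i + j))
    (hdom : ∀ (i j : ℕ) (x y : A), x ∈ F i → y ∈ F j → x * y ∈ F (i + j + 1) →
      x ∈ F (i + 1) ∨ y ∈ F (j + 1))
    {x : A} {d : ℕ} (hx : x ∈ F d) (hx' : x ∉ F (d + 1)) :
    ∀ m : ℕ, 0 < m → x ^ m ∉ F (m * d + 1) := by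
  intro m
  induction m with
  | zero => omega
  | succ m ih =>
      intro _ hmem
      rcases Nat.eq_zero_or_pos m with hm | hm
      · subst hm; exact hx' (by simpa using hmem)
      · have hxm : x ^ m ∈ F (m * d) := powMemF F hF0 hmul hx m
        have he : (m + 1) * d + 1 = d + m * d + 1 := by ring_nf
        have hp : x ^ (m + 1) = x * x ^ m := by ring
        rw [he, hp] at hmem
        have hmul' : x * x ^ m ∈ F (d + m * d + 1) := hmem
        rcases hdom d (m * d) x (x ^ m) hx hxm hmul' with h | h
        · exact hx' h
        · exact ih hm h

private lemma prodMemF (F : ℕ → Ideal A) (hF0 : F 0 = ⊤)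
    (hmul : ∀ i j : ℕ, F i * F j ≤ F (i + j)) (i : ℕ) :
    ∀ L : Multiset A, (∀ y ∈ L, y ∈ F i) → L.prod ∈ F (Multiset.card L * i) := by
  intro L
  induction L using Multiset.induction_on with
  | empty => intro _; simp [hF0]
  | cons a L ih =>
      intro h
      have ha : a ∈ F i := h a (Multiset.mem_cons_self a L)
      have hL : L.prod ∈ F (Multiset.card L * i) :=
        ih fun y hy => h y (Multiset.mem_cons_of_mem hy)
      have h2 := hmul i (Multiset.card L * i) (Ideal.mul_mem_mul ha hL)
      have he : Multiset.card (a ::ₘ L) * i = i + Multiset.card L * i := by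
        simp only [Multiset.card_cons]; ring
      rw [Multiset.prod_cons, he]
      exact h2

private lemma factorF (F : ℕ → Ideal A) (hF0 : F 0 = ⊤)
    (hmul : ∀ i j : ℕ, F i * F j ≤ F (i + j))
    (hdom : ∀ (i j : ℕ) (x y : A), x ∈ F i → y ∈ F j → x * y ∈ F (i + j + 1) →
      x ∈ F (i + 1) ∨ y ∈ F (j + 1))
    (hone : (1 : A) ∉ F 1) (i : ℕ) :
    ∀ L : Multiset A, (∀ y ∈ L, y ∈ F i) →
      L.prod ∈ F (Multiset.card L * i + 1) → ∃ y ∈ L, y ∈ F (i + 1) := by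
  intro L
  induction L using Multiset.induction_on with
  | empty =>
      intro _ h
      simp only [Multiset.prod_zero, Multiset.card_zero, Nat.zero_mul, Nat.zero_add] at h
      exact absurd h hone
  | cons a L ih =>
      intro hmem hprod
      have ha : a ∈ F i := hmem a (Multiset.mem_cons_self a L)
      have hL : L.prod ∈ F (Multiset.card L * i) :=
        prodMemF F hF0 hmul i L fun y hy => hmem y (Multiset.mem_cons_of_mem hy)
      have he : Multiset.card (a ::ₘ L) * i + 1 = i + Multiset.card L * i + 1 := by
        simp only [Multiset.card_cons]; ring
      rw [Multiset.prod_cons, he] at hprod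
      rcases hdom i (Multiset.card L * i) a L.prod ha hL hprod with h | h
      · exact ⟨a, Multiset.mem_cons_self a L, h⟩
      · obtain ⟨y, hy, hy'⟩ := ih (fun y hy => hmem y (Multiset.mem_cons_of_mem hy)) h
        exact ⟨y, Multiset.mem_cons_of_mem hy, hy'⟩

private lemma prodLinearEqSum [Nontrivial A] (x u : A) :
    ∀ L : Multiset A,
      (L.map (fun l => x - l * u)).prod =
        ∑ t ∈ Finset.range (Multiset.card L + 1),
          ((L.map (fun l => (X - C l : A[X]))).prod).coeff t * x ^ t *
            u ^ (Multiset.card L - t) := by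
  intro L
  induction L using Multiset.induction_on with
  | empty => simp
  | cons a L ih =>
      set m := Multiset.card L with hm
      set q : A[X] := (L.map (fun l => (X - C l : A[X]))).prod with hq
      have hqdeg : q.natDegree ≤ m := by
        refine le_trans (natDegree_multiset_prod_le _) ?_
        rw [Multiset.map_map]
        simp [Function.comp_def, natDegree_X_sub_C, Multiset.map_const', Multiset.sum_replicate, natDegree_X, hm]
      have hqtop : q.coeff (m + 1) = 0 :=
        coeff_eq_zero_of_natDegree_lt (by omega)
      have hcard : Multiset.card (a ::ₘ L) = m + 1 := by simp [hm]
      rw [Multiset.map_cons, Multiset.prod_cons, Multiset.map_cons, Multiset.prod_cons, ih,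
        hcard, ← hq]
      set H := ∑ t ∈ Finset.range (m + 1), q.coeff t * x ^ t * u ^ (m - t) with hH
      have hS1 : ∑ t ∈ Finset.range (m + 1 + 1), (X * q).coeff t * x ^ t * u ^ (m + 1 - t)
          = x * H := by
        rw [Finset.sum_range_succ']
        simp only [coeff_X_mul, mul_coeff_zero, coeff_X_zero, zero_mul, pow_zero, mul_one,
          add_zero, Nat.succ_sub_succ]
        rw [hH, Finset.mul_sum]
        apply Finset.sum_congr rfl; intro t _; ring
      have hS2 : ∑ t ∈ Finset.range (m + 1 + 1), q.coeff t * x ^ t * u ^ (m + 1 - t)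
          = u * H := by
        rw [Finset.sum_range_succ]
        rw [hqtop, zero_mul, zero_mul, add_zero, hH, Finset.mul_sum]
        apply Finset.sum_congr rfl; intro t ht
        have ht' : m + 1 - t = (m - t) + 1 := by
          have := Finset.mem_range.1 ht; omega
        rw [ht', pow_succ]; ring
      calc (x - a * u) * H = x * H - a * (u * H) := by ring
        _ = (∑ t ∈ Finset.range (m + 1 + 1), (X * q).coeff t * x ^ t * u ^ (m + 1 - t))
            - a * ∑ t ∈ Finset.range (m + 1 + 1), q.coeff t * x ^ t * u ^ (m + 1 - t) := by
            rw [hS1, hS2]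
        _ = ∑ t ∈ Finset.range (m + 1 + 1),
              ((X - C a) * q).coeff t * x ^ t * u ^ (m + 1 - t) := by
            rw [Finset.mul_sum, ← Finset.sum_sub_distrib]
            refine Finset.sum_congr rfl fun t _ => ?_
            rw [sub_mul, coeff_sub, coeff_C_mul]
            ring
      rfl

end Helpers

section Helpers2

variable {A : Type*} [CommRing A]

private lemma powIdealF (F : ℕ → Ideal A) (hF0 : F 0 = ⊤)
    (hmul : ∀ i j : ℕ, F i * F j ≤ F (i + j)) (i : ℕ) :
    ∀ s : ℕ, (F i) ^ s ≤ F (s * i) := by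
  intro s
  induction s with
  | zero => simp [Ideal.one_eq_top, hF0]
  | succ s ih =>
      calc (F i) ^ (s + 1) = (F i) ^ s * F i := pow_succ _ _
        _ ≤ F (s * i) * F i := Ideal.mul_mono ih le_rfl
        _ ≤ F (s * i + i) := hmul _ _
        _ = F ((s + 1) * i) := by ring_nf

private lemma sumCoeffCXpow (x u a : A) {m n : ℕ} (hm : m ≤ n) :
    ∑ t ∈ Finset.range (n + 1), (C a * X ^ m : A[X]).coeff t * x ^ t * u ^ (n - t)
      = a * x ^ m * u ^ (n - m) := by
  rw [Finset.sum_eq_single m]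
  · simp [coeff_C_mul, coeff_X_pow]
  · intro b _ hb; simp [coeff_C_mul, coeff_X_pow, hb]
  · intro h; exact absurd (Finset.mem_range.2 (Nat.lt_succ_of_le hm)) h

end Helpers2

private theorem stmt5' (A : Type*) [CommRing A] [IsNoetherianRing A] [IsLocalRing A]
    [IsAlgClosed (ResidueField A)]
    (F : ℕ → Ideal A) (hF0 : F 0 = ⊤) (hF1 : F 1 = maximalIdeal A)
    (hanti : ∀ i j : ℕ, i ≤ j → F j ≤ F i)
    (hmul : ∀ i j : ℕ, F i * F j ≤ F (i + j))
    (hsep : (⨅ i : ℕ, F i) = ⊥)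
    (hdom : ∀ (i j : ℕ) (x y : A), x ∈ F i → y ∈ F j → x * y ∈ F (i + j + 1) →
      x ∈ F (i + 1) ∨ y ∈ F (j + 1))
    (i : ℕ) (I : Ideal A) (hlow : F (i + 1) ≤ I) (hup : I ≤ F i) (hlen : F (i + 1) ⋖ I) :
    ∀ x : A, (∃ n : ℕ, 0 < n ∧ ∃ a : ℕ → A, (∀ s ∈ Finset.Icc 1 n, a s ∈ I ^ s) ∧
      x ^ n + ∑ s ∈ Finset.Icc 1 n, a s * x ^ (n - s) = 0) → x ∈ I := by
  intro x hxint
  classical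
  obtain ⟨n, hn, a, ha, heq⟩ := hxint
  have hone : (1 : A) ∉ F 1 := by
    rw [hF1]
    intro h
    exact (maximalIdeal.isMaximal A).ne_top ((Ideal.eq_top_iff_one _).2 h)
  by_cases hx0 : x = 0
  · exact hx0 ▸ I.zero_mem
  have hex : ∃ j, x ∉ F j := by
    by_contra h
    push_neg at h
    have hmem : x ∈ (⊥ : Ideal A) := hsep ▸ (Submodule.mem_iInf _).2 h
    exact hx0 ((Submodule.mem_bot A).1 hmem)
  -- Step 1: x ∈ F i
  have hxFi : x ∈ F i := by
    by_cases hdi : x ∈ F i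
    · exact hdi
    exfalso
    set e := Nat.find hex with he
    have hespec : x ∉ F e := Nat.find_spec hex
    have hepos : 0 < e := by
      rcases Nat.eq_zero_or_pos e with h0 | h0
      · exact absurd (by rw [h0, hF0]; trivial) hespec
      · exact h0
    set d := e - 1 with hd
    have hxd : x ∈ F d := by
      by_contra h
      exact Nat.find_min hex (show d < e by omega) h
    have hxd1 : x ∉ F (d + 1) := by
      have hde : d + 1 = e := by omega
      rw [hde]; exact hespec
    have hdlt : d + 1 ≤ i := by
      by_contra h
      push_neg at h
      exact hdi (hanti i d (by omega) hxd)
    have hxn : x ^ n ∈ F (n * d + 1) := by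
      have hxe : x ^ n = -∑ s ∈ Finset.Icc 1 n, a s * x ^ (n - s) :=
        eq_neg_of_add_eq_zero_left heq
      rw [hxe]
      refine Submodule.neg_mem _ (Ideal.sum_mem _ fun s hs => ?_)
      obtain ⟨hs1, hs2⟩ := Finset.mem_Icc.1 hs
      have hIsub : I ^ s ≤ F (s * i) :=
        le_trans (Ideal.pow_right_mono hup s) (powIdealF F hF0 hmul i s)
      have hax : a s * x ^ (n - s) ∈ F (s * i + (n - s) * d) :=
        hmul _ _ (Ideal.mul_mem_mul (hIsub (ha s hs)) (powMemF F hF0 hmul hxd (n - s)))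
      refine hanti _ _ ?_ hax
      have e1 : (n - s) * d + s * d = n * d := by
        rw [← Nat.add_mul]; congr 1; omega
      have e2 : s * (d + 1) ≤ s * i := Nat.mul_le_mul_left s hdlt
      have e3 : s * (d + 1) = s * d + s := by ring
      linarith
    exact powNotMemF F hF0 hmul hdom hxd hxd1 n hn hxn
  -- Step 2: find u generating I over F (i+1)
  obtain ⟨hlt, hmax⟩ := hlen
  obtain ⟨u, huI, huF⟩ := SetLike.exists_of_lt hlt
  have huFi : u ∈ F i := hup huI
  have hIeq : Ideal.span {u} ⊔ F (i + 1) = I := by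
    have hle : Ideal.span {u} ⊔ F (i + 1) ≤ I :=
      sup_le ((Ideal.span_singleton_le_iff_mem _).2 huI) hlow
    have hlt2 : F (i + 1) < Ideal.span {u} ⊔ F (i + 1) := by
      refine lt_of_le_of_ne le_sup_right fun h => huF ?_
      rw [h]
      exact Ideal.mem_sup_left (Ideal.mem_span_singleton_self u)
    rcases lt_or_eq_of_le hle with h | h
    · exact absurd h (hmax hlt2)
    · exact h
  -- Step 3: powers of I
  have hIpow : ∀ s : ℕ, I ^ s ≤ Ideal.span {u ^ s} ⊔ F (i * s + 1) := by
    intro s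
    induction s with
    | zero => simp [Ideal.one_eq_top]
    | succ s ih =>
        have hss : Ideal.span {u ^ s} ≤ F (i * s) := by
          rw [Ideal.span_le, Set.singleton_subset_iff]
          have h := powMemF F hF0 hmul huFi s
          rwa [Nat.mul_comm] at h
        have hu1 : Ideal.span {u} ≤ F i := by
          rw [Ideal.span_le, Set.singleton_subset_iff]; exact huFi
        calc I ^ (s + 1) = I ^ s * I := pow_succ _ _
          _ ≤ (Ideal.span {u ^ s} ⊔ F (i * s + 1)) * (Ideal.span {u} ⊔ F (i + 1)) :=
              Ideal.mul_mono ih hIeq.ge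
          _ = Ideal.span {u ^ s} * Ideal.span {u} ⊔ Ideal.span {u ^ s} * F (i + 1)
              ⊔ (F (i * s + 1) * Ideal.span {u} ⊔ F (i * s + 1) * F (i + 1)) := by
              rw [Ideal.sup_mul, Ideal.mul_sup, Ideal.mul_sup]
          _ ≤ Ideal.span {u ^ (s + 1)} ⊔ F (i * (s + 1) + 1) := by
              refine sup_le (sup_le ?_ ?_) (sup_le ?_ ?_)
              · rw [Ideal.span_singleton_mul_span_singleton, ← pow_succ]
                exact le_sup_left
              · refine le_sup_of_le_right ?_
                refine le_trans (Ideal.mul_mono hss le_rfl) ?_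
                refine le_trans (hmul (i * s) (i + 1)) (hanti _ _ (by ring_nf; omega))
              · refine le_sup_of_le_right ?_
                refine le_trans (Ideal.mul_mono le_rfl hu1) ?_
                refine le_trans (hmul (i * s + 1) i) (hanti _ _ (by ring_nf; omega))
              · refine le_sup_of_le_right ?_
                refine le_trans (hmul (i * s + 1) (i + 1)) (hanti _ _ (by ring_nf; omega))
  -- Step 4: choose coefficients c s
  have hch : ∀ s : ℕ, ∃ b : A, s ∈ Finset.Icc 1 n → a s - b * u ^ s ∈ F (i * s + 1) := by
    intro s
    by_cases hs : s ∈ Finset.Icc 1 n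
    · obtain ⟨y, hy, z, hz, hyz⟩ := Submodule.mem_sup.1 (hIpow s (ha s hs))
      obtain ⟨b, hb⟩ := Ideal.mem_span_singleton'.1 hy
      refine ⟨b, fun _ => ?_⟩
      have hzz : a s - b * u ^ s = z := by rw [hb, ← hyz]; ring
      rw [hzz]; exact hz
    · exact ⟨0, fun h => absurd h hs⟩
  choose c hc using hch
  -- Step 5: the combination lies deep
  have hPmem : x ^ n + ∑ s ∈ Finset.Icc 1 n, c s * u ^ s * x ^ (n - s) ∈ F (n * i + 1) := by
    have hxe : x ^ n = -∑ s ∈ Finset.Icc 1 n, a s * x ^ (n - s) :=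
      eq_neg_of_add_eq_zero_left heq
    have hre : x ^ n + ∑ s ∈ Finset.Icc 1 n, c s * u ^ s * x ^ (n - s)
        = ∑ s ∈ Finset.Icc 1 n, (c s * u ^ s - a s) * x ^ (n - s) := by
      rw [hxe, neg_add_eq_sub, ← Finset.sum_sub_distrib]
      refine Finset.sum_congr rfl fun s _ => ?_
      ring
    rw [hre]
    refine Ideal.sum_mem _ fun s hs => ?_
    obtain ⟨hs1, hs2⟩ := Finset.mem_Icc.1 hs
    have h1 : c s * u ^ s - a s ∈ F (i * s + 1) := by
      have h := Submodule.neg_mem _ (hc s hs)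
      rwa [neg_sub] at h
    have h2 : x ^ (n - s) ∈ F ((n - s) * i) := powMemF F hF0 hmul hxFi (n - s)
    have h3 := hmul _ _ (Ideal.mul_mem_mul h1 h2)
    refine hanti _ _ ?_ h3
    have e1 : (n - s) * i + s * i = n * i := by
      rw [← Nat.add_mul]; congr 1; omega
    have e2 : i * s = s * i := Nat.mul_comm _ _
    linarith
  -- Step 6: polynomial bookkeeping
  set g : A[X] := ∑ s ∈ Finset.Icc 1 n, C (c s) * X ^ (n - s) with hgdef
  have hgdeg : g.degree < (n : ℕ) := by
    refine lt_of_le_of_lt (degree_sum_le _ _) ?_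
    rw [Finset.sup_lt_iff (by exact_mod_cast WithBot.bot_lt_coe n)]
    intro s hs
    obtain ⟨hs1, hs2⟩ := Finset.mem_Icc.1 hs
    refine lt_of_le_of_lt (degree_C_mul_X_pow_le _ _) ?_
    exact_mod_cast Nat.sub_lt (by omega) (by omega)
  set qA : A[X] := X ^ n + g with hqadef
  have hqmonic : qA.Monic := monic_X_pow_add hgdeg
  have hqdeg : qA.natDegree = n := by
    have hdq : qA.degree = (n : ℕ) := by
      rw [hqadef, degree_add_eq_left_of_degree_lt (by rwa [degree_X_pow]), degree_X_pow]
    exact natDegree_eq_of_degree_eq_some hdq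
  set pk : Polynomial (ResidueField A) := qA.map (residue A) with hpkdef
  have hpmonic : pk.Monic := hqmonic.map _
  have hpdeg : pk.natDegree = n := by
    rw [hpkdef, hqmonic.natDegree_map]; exact hqdeg
  have hsplit : pk.Splits := IsAlgClosed.splits pk
  have hcard : Multiset.card pk.roots = n :=
    (splits_iff_card_roots.1 hsplit).trans hpdeg
  set L : Multiset A := pk.roots.map (Function.surjInv (residue_surjective (R := A))) with hLdef
  have hLcard : Multiset.card L = n := by rw [hLdef, Multiset.card_map, hcard]
  set rA : A[X] := (L.map fun l => X - C l).prod with hradef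
  have hrmap : rA.map (residue A) = pk := by
    conv_rhs => rw [hsplit.eq_prod_roots_of_monic hpmonic]
    rw [hradef, Polynomial.map_multiset_prod, hLdef, Multiset.map_map, Multiset.map_map]
    refine congrArg _ (Multiset.map_congr rfl fun r hr => ?_)
    simp [Function.surjInv_eq (residue_surjective (R := A))]
  have hcoeffmem : ∀ t, qA.coeff t - rA.coeff t ∈ maximalIdeal A := by
    intro t
    rw [← residue_eq_zero_iff, map_sub]
    have h1 : residue A (qA.coeff t) = pk.coeff t := by rw [hpkdef, coeff_map]
    have h2 : residue A (rA.coeff t) = pk.coeff t := by rw [← hrmap, coeff_map]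
    rw [h1, h2, sub_self]
  -- Step 7: evaluate sums
  have hHq : ∑ t ∈ Finset.range (n + 1), qA.coeff t * x ^ t * u ^ (n - t)
      = x ^ n + ∑ s ∈ Finset.Icc 1 n, c s * u ^ s * x ^ (n - s) := by
    have hsplitsum : ∀ t, qA.coeff t = (X ^ n : A[X]).coeff t
        + ∑ s ∈ Finset.Icc 1 n, (C (c s) * X ^ (n - s)).coeff t := by
      intro t; rw [hqadef, coeff_add, hgdef, finset_sum_coeff]
    calc ∑ t ∈ Finset.range (n + 1), qA.coeff t * x ^ t * u ^ (n - t)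
        = (∑ t ∈ Finset.range (n + 1), (C (1:A) * X ^ n : A[X]).coeff t * x ^ t * u ^ (n - t))
          + ∑ t ∈ Finset.range (n + 1), ∑ s ∈ Finset.Icc 1 n,
              (C (c s) * X ^ (n - s)).coeff t * x ^ t * u ^ (n - t) := by
          rw [← Finset.sum_add_distrib]
          refine Finset.sum_congr rfl fun t _ => ?_
          rw [hsplitsum t, C_1, one_mul, add_mul, add_mul, Finset.sum_mul, Finset.sum_mul]
      _ = x ^ n + ∑ s ∈ Finset.Icc 1 n, c s * u ^ s * x ^ (n - s) := by
          congr 1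
          · rw [sumCoeffCXpow x u 1 le_rfl, Nat.sub_self, pow_zero, one_mul, mul_one]
          · rw [Finset.sum_comm]
            refine Finset.sum_congr rfl fun s hs => ?_
            obtain ⟨hs1, hs2⟩ := Finset.mem_Icc.1 hs
            rw [sumCoeffCXpow x u (c s) (Nat.sub_le n s)]
            have hns : n - (n - s) = s := by omega
            rw [hns]; ring
  have hHr : (L.map fun l => x - l * u).prod
      = ∑ t ∈ Finset.range (n + 1), rA.coeff t * x ^ t * u ^ (n - t) := by
    rw [prodLinearEqSum x u L, hLcard, ← hradef]
  -- Step 8: product of linear forms lies deep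
  have hprodmem : (L.map fun l => x - l * u).prod ∈ F (n * i + 1) := by
    have hdiffmem : ∑ t ∈ Finset.range (n + 1),
        (qA.coeff t - rA.coeff t) * (x ^ t * u ^ (n - t)) ∈ F (n * i + 1) := by
      refine Ideal.sum_mem _ fun t ht => ?_
      have ht' : t ≤ n := by have := Finset.mem_range.1 ht; omega
      have h1 : qA.coeff t - rA.coeff t ∈ F 1 := by rw [hF1]; exact hcoeffmem t
      have h2 : x ^ t * u ^ (n - t) ∈ F (t * i + (n - t) * i) :=
        hmul _ _ (Ideal.mul_mem_mul (powMemF F hF0 hmul hxFi t) (powMemF F hF0 hmul huFi (n - t)))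
      have h3 := hmul _ _ (Ideal.mul_mem_mul h1 h2)
      refine hanti _ _ ?_ h3
      have e1 : t * i + (n - t) * i = n * i := by
        rw [← Nat.add_mul]; congr 1; omega
      linarith
    have hsplit2 : (L.map fun l => x - l * u).prod
        = (x ^ n + ∑ s ∈ Finset.Icc 1 n, c s * u ^ s * x ^ (n - s))
          - ∑ t ∈ Finset.range (n + 1), (qA.coeff t - rA.coeff t) * (x ^ t * u ^ (n - t)) := by
      rw [hHr, ← hHq, ← Finset.sum_sub_distrib]
      refine Finset.sum_congr rfl fun t _ => ?_
      ring
    rw [hsplit2]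
    exact Submodule.sub_mem _ hPmem hdiffmem
  -- Step 9: one factor drops in level, conclude
  obtain ⟨y, hyL, hyF⟩ := factorF F hF0 hmul hdom hone i (L.map fun l => x - l * u)
    (fun y hy => by
      obtain ⟨l, _, rfl⟩ := Multiset.mem_map.1 hy
      exact Submodule.sub_mem _ hxFi (Ideal.mul_mem_left _ l huFi))
    (by rw [Multiset.card_map, hLcard]; exact hprodmem)
  obtain ⟨l, hl, rfl⟩ := Multiset.mem_map.1 hyL
  have hxeq : x = l * u + (x - l * u) := by ring
  rw [hxeq]
  exact I.add_mem (Ideal.mul_mem_left _ _ huI) (hlow hyF)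

end AuxiliaryLemmas

/-- Example 3.3: with a multiplicative filtration `F` (`F₁ = 𝔪`, `F_i F_j ⊆ F_{i+j}`,
`∩ F_i = 0`) whose associated graded ring is a domain, any ideal `I` with
`F_{i+1} ⊆ I ⊆ F_i` and `length (I/F_{i+1}) = 1` (i.e. `F_{i+1}` covered by `I`)
is integrally closed. -/
theorem stmt5 (A : Type*) [CommRing A] [IsNoetherianRing A] [IsLocalRing A]
    [IsAlgClosed (ResidueField A)]
    (F : ℕ → Ideal A) (hF0 : F 0 = ⊤) (hF1 : F 1 = maximalIdeal A)
    (hanti : ∀ i j : ℕ, i ≤ j → F j ≤ F i)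
    (hmul : ∀ i j : ℕ, F i * F j ≤ F (i + j))
    (hsep : (⨅ i : ℕ, F i) = ⊥)
    (hdom : ∀ (i j : ℕ) (x y : A), x ∈ F i → y ∈ F j → x * y ∈ F (i + j + 1) →
      x ∈ F (i + 1) ∨ y ∈ F (j + 1))
    (i : ℕ) (I : Ideal A) (hlow : F (i + 1) ≤ I) (hup : I ≤ F i) (hlen : F (i + 1) ⋖ I) :
    IdealIsIntegrallyClosed I := by
  exact stmt5' A F hF0 hF1 hanti hmul hsep hdom i I hlow hup hlen
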